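/- arXiv:math-ph/0405019 — 2 statements merged into one kernel-verified Lean document; each statement's English description precedes it below -/
import Mathlib

section
/- Let J = [[0, −1], [1, 0]] and let T be a 2×2 complex matrix with T* J T = J (i.e. T ∈ U(1,1)) and |Tr(T)| < 2. Then |det T| = 1, and there exist a real matrix M with det M = 1 and real numbers ξ, η such that M T M⁻¹ = e^{iξ}·R_η, where R_η = [[cos η, −sin η],[sin η, cos η]] is the rotation matrix by angle η. -/
open Matrix Complex

noncomputable section

/-- The matrix `J = [[0,−1],[1,0]]` over ℂ. -/
def Jmat : Matrix (Fin 2) (Fin 2) ℂ := !![0, -1; 1, 0]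

/-- Rotation matrix by angle `x`. -/
def Rot (x : ℝ) : Matrix (Fin 2) (Fin 2) ℝ :=
  !![Real.cos x, -Real.sin x; Real.sin x, Real.cos x]

lemma elliptic_conj (A : Matrix (Fin 2) (Fin 2) ℝ) (hdet : A.det = 1)
    (htr : |A.trace| < 2) :
    ∃ M : Matrix (Fin 2) (Fin 2) ℝ, M.det = 1 ∧ ∃ η : ℝ, M * A * M⁻¹ = Rot η := by
  set a := A 0 0 with ha
  set b := A 0 1 with hb
  set c := A 1 0 with hc
  set d := A 1 1 with hd
  have h5 : a * d - b * c = 1 := by rw [Matrix.det_fin_two] at hdet; exact hdet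
  have htr' : |a + d| < 2 := by rwa [Matrix.trace_fin_two] at htr
  have htr2 := abs_lt.mp htr'
  have hcne : c ≠ 0 := by
    intro h
    rw [h, mul_zero, sub_zero] at h5
    nlinarith [sq_nonneg (a - d), htr2.1, htr2.2]
  have hb1 : -1 ≤ (a + d)/2 := by linarith [htr2.1]
  have hb2 : (a + d)/2 ≤ 1 := by linarith [htr2.2]
  set η₀ := Real.arccos ((a + d)/2) with hη₀
  have hpos : 0 < Real.sin η₀ := by
    rw [hη₀, Real.sin_arccos]
    apply Real.sqrt_pos.mpr; nlinarith [htr2.1, htr2.2]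
  set η : ℝ := if 0 < c then η₀ else -η₀ with hη
  have h1 : Real.cos η * 2 = a + d := by
    rw [hη]; split <;> simp [hη₀, Real.cos_arccos hb1 hb2]
  have h2 : Real.sin η ^ 2 + Real.cos η ^ 2 = 1 := Real.sin_sq_add_cos_sq η
  have hcs : 0 < c / Real.sin η := by
    rw [hη]; split
    · exact div_pos (by assumption) hpos
    · rw [Real.sin_neg]
      rcases lt_or_ge c 0 with h | h
      · exact div_pos_of_neg_of_neg h (by linarith)
      · exact absurd (lt_of_le_of_ne h (Ne.symm hcne)) (by assumption)
  have hSne : Real.sin η ≠ 0 := by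
    intro h; rw [h, div_zero] at hcs; exact lt_irrefl 0 hcs
  set q := Real.sqrt (c / Real.sin η) with hqdef
  have hq2 : q ^ 2 = c / Real.sin η := Real.sq_sqrt hcs.le
  have hqne : q ≠ 0 := (Real.sqrt_pos.mpr hcs).ne'
  have h3 : c = Real.sin η * q * q := by
    rw [mul_assoc, ← sq, hq2]; field_simp
  set p := (a - d)/(2 * Real.sin η) with hp
  have h4 : a - d = 2 * Real.sin η * p := by rw [hp]; field_simp
  set M : Matrix (Fin 2) (Fin 2) ℝ := !![q, -p/q; 0, 1/q] with hM
  have hMdet : M.det = 1 := by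
    rw [hM, Matrix.det_fin_two_of]; field_simp; simp
  refine ⟨M, hMdet, η, ?_⟩
  have hcomm : M * A = Rot η * M := by
    ext i j
    fin_cases i <;> fin_cases j <;>
        simp [Matrix.mul_apply, Fin.sum_univ_two, Rot, hM, ← ha, ← hb, ← hc, ← hd] <;>
        field_simp
    · linear_combination (q*q/2) * h4 - (q*q/2) * h1 - p * h3
    · apply mul_left_cancel₀ hSne
      linear_combination -b * h3 + (Real.sin η * p / 2 - (Real.cos η + (a + d) / 2) / 2) * h1
        - ((a - d) / 4) * h4 + h2 - h5
    · linear_combination h3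
    · linear_combination -(1/2) * h4 - (1/2) * h1
  have hMinv : M * M⁻¹ = 1 := Matrix.mul_nonsing_inv M (by rw [hMdet]; norm_num)
  calc M * A * M⁻¹ = Rot η * M * M⁻¹ := by rw [hcomm]
    _ = Rot η := by rw [Matrix.mul_assoc, hMinv, Matrix.mul_one]

/-- Every `T ∈ U(1,1)` with `|Tr T| < 2` has `|det T| = 1` and is
conjugate, by a real matrix `M` of determinant 1, to a phase times a rotation:
`M T M⁻¹ = e^{iξ} R_η`. -/
theorem u11_normal_form (T : Matrix (Fin 2) (Fin 2) ℂ)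
    (hT : Tᴴ * Jmat * T = Jmat) (htr : ‖T.trace‖ < 2) :
    ‖T.det‖ = 1 ∧
    ∃ M : Matrix (Fin 2) (Fin 2) ℝ, M.det = 1 ∧ ∃ ξ η : ℝ,
      (M.map (fun x : ℝ => (x : ℂ))) * T * (M.map (fun x : ℝ => (x : ℂ)))⁻¹
        = Complex.exp (Complex.I * ξ) • (Rot η).map (fun x : ℝ => (x : ℂ)) := by
  have hJdet : Jmat.det = 1 := by rw [Jmat, Matrix.det_fin_two_of]; norm_num
  have hdd : star T.det * T.det = 1 := by
    have h := congrArg Matrix.det hT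
    rw [Matrix.det_mul, Matrix.det_mul, Matrix.det_conjTranspose, hJdet, mul_one] at h
    exact h
  have habs : ‖T.det‖ = 1 := by
    rw [Complex.star_def, mul_comm, Complex.mul_conj] at hdd
    have h2 : Complex.normSq T.det = 1 := by exact_mod_cast hdd
    have h3 : ‖T.det‖ ^ 2 = 1 := by rw [Complex.sq_norm, h2]
    nlinarith [norm_nonneg T.det, h3]
  set ξ : ℝ := T.det.arg / 2 with hξ
  set e : ℂ := Complex.exp (Complex.I * ξ) with he
  have hene : e ≠ 0 := Complex.exp_ne_zero _
  have he2 : e * e = T.det := by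
    rw [he, ← Complex.exp_add]
    have : Complex.I * ξ + Complex.I * ξ = T.det.arg * Complex.I := by
      rw [hξ]; push_cast; ring
    rw [this]
    conv_rhs => rw [← Complex.norm_mul_exp_arg_mul_I T.det]
    rw [habs]; norm_num
  have hestar : star e * e = 1 := by
    rw [he, Complex.star_def, ← Complex.exp_conj, ← Complex.exp_add]
    have : (starRingEnd ℂ) (Complex.I * ξ) + Complex.I * ξ = 0 := by
      simp [_root_.map_mul, Complex.conj_I, Complex.conj_ofReal]
    rw [this, Complex.exp_zero]
  set S : Matrix (Fin 2) (Fin 2) ℂ := e⁻¹ • T with hS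
  have hT_eq : T = e • S := by
    rw [hS, smul_smul, mul_inv_cancel₀ hene, one_smul]
  have hSJ : Sᴴ * Jmat * S = Jmat := by
    rw [hS, Matrix.conjTranspose_smul, Matrix.smul_mul, Matrix.smul_mul,
      Matrix.mul_smul, smul_smul, hT]
    have hinv : e⁻¹ = star e := inv_eq_of_mul_eq_one_left hestar
    have : star e⁻¹ * e⁻¹ = 1 := by rw [hinv, star_star, mul_comm, hestar]
    rw [this, one_smul]
  have hdetS : S.det = 1 := by
    rw [hS, Matrix.det_smul, Fintype.card_fin, ← he2]
    rw [sq]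
    field_simp
  have hJJ : Jmat * Jmat = -1 := by
    ext i j
    fin_cases i <;> fin_cases j <;>
      simp [Jmat, Matrix.mul_apply, Fin.sum_univ_two, Matrix.one_apply]
  have hadj : S * S.adjugate = 1 := by
    rw [Matrix.mul_adjugate, hdetS, one_smul]
  have hB : (-Jmat) * Sᴴ * Jmat = S.adjugate := by
    have hleft : ((-Jmat) * Sᴴ * Jmat) * S = 1 := by
      calc ((-Jmat) * Sᴴ * Jmat) * S = (-Jmat) * (Sᴴ * Jmat * S) := by
            simp only [Matrix.mul_assoc]
        _ = (-Jmat) * Jmat := by rw [hSJ]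
        _ = 1 := by rw [Matrix.neg_mul, hJJ]; simp
    calc (-Jmat) * Sᴴ * Jmat = ((-Jmat) * Sᴴ * Jmat) * (S * S.adjugate) := by
          rw [hadj, Matrix.mul_one]
      _ = (((-Jmat) * Sᴴ * Jmat) * S) * S.adjugate := by simp only [Matrix.mul_assoc]
      _ = S.adjugate := by rw [hleft, Matrix.one_mul]
  have hB2 : (-Jmat) * Sᴴ * Jmat = !![S 1 1, -S 0 1; -S 1 0, S 0 0] := by
    rw [hB, Matrix.adjugate_fin_two]
  have key : ∀ i j, star (S i j) = S i j := by
    intro i j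
    fin_cases i <;> fin_cases j
    · have h := congrFun (congrFun hB2 1) 1
      simpa [Jmat, Matrix.mul_apply, Fin.sum_univ_two, Matrix.conjTranspose_apply,
        Matrix.vecMul, dotProduct, neg_eq_iff_eq_neg] using h
    · have h := congrFun (congrFun hB2 0) 1
      simpa [Jmat, Matrix.mul_apply, Fin.sum_univ_two, Matrix.conjTranspose_apply,
        Matrix.vecMul, dotProduct, neg_eq_iff_eq_neg] using h
    · have h := congrFun (congrFun hB2 1) 0
      simpa [Jmat, Matrix.mul_apply, Fin.sum_univ_two, Matrix.conjTranspose_apply,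
        Matrix.vecMul, dotProduct, neg_eq_iff_eq_neg] using h
    · have h := congrFun (congrFun hB2 0) 0
      simpa [Jmat, Matrix.mul_apply, Fin.sum_univ_two, Matrix.conjTranspose_apply,
        Matrix.vecMul, dotProduct, neg_eq_iff_eq_neg] using h
  set Sr : Matrix (Fin 2) (Fin 2) ℝ := Matrix.of (fun i j => (S i j).re) with hSrdef
  have hmap : Sr.map (fun x : ℝ => (x : ℂ)) = S := by
    ext i j
    simp only [hSrdef, Matrix.map_apply, Matrix.of_apply]
    exact Complex.conj_eq_iff_re.mp (key i j)
  have hcoe : (fun x : ℝ => (x : ℂ)) = ⇑Complex.ofRealHom := rfl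
  have hdetSr : Sr.det = 1 := by
    have h := (RingHom.map_det Complex.ofRealHom Sr).symm
    rw [RingHom.mapMatrix_apply, ← hcoe, hmap, hdetS] at h
    have h2 : ((Sr.det : ℝ) : ℂ) = 1 := h.symm
    exact_mod_cast h2
  have htrS : S.trace = ((Sr.trace : ℝ) : ℂ) := by
    rw [← hmap]
    simp [Matrix.trace_fin_two, Matrix.map_apply]
  have habse : ‖e‖ = 1 := by
    rw [he, Complex.norm_exp]
    simp
  have htrSr : |Sr.trace| < 2 := by
    have h : ‖T.trace‖ = |Sr.trace| := by
      rw [hT_eq, Matrix.trace_smul, smul_eq_mul, norm_mul, habse, htrS, one_mul,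
        Complex.norm_real, Real.norm_eq_abs]
    linarith [htr, h.symm.le, h ▸ htr]
  obtain ⟨M, hMdet, η, hconj⟩ := elliptic_conj Sr hdetSr htrSr
  refine ⟨habs, M, hMdet, ξ, η, ?_⟩
  have hMinvmap : (M.map (fun x : ℝ => (x : ℂ)))⁻¹ = M⁻¹.map (fun x : ℝ => (x : ℂ)) := by
    apply Matrix.inv_eq_right_inv
    rw [hcoe, ← Matrix.map_mul, Matrix.mul_nonsing_inv M (by rw [hMdet]; exact isUnit_one),
      Matrix.map_one _ (map_zero _) (map_one _)]
  rw [hMinvmap, hT_eq, Matrix.mul_smul, Matrix.smul_mul, ← hmap, hcoe,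
    ← Matrix.map_mul, ← Matrix.map_mul, hconj, he]
end
end

section
/- Let (T_n)_{n≥1} be i.i.d. random matrices with values in SL(2,ℝ), with E‖Ad_{T_1}‖ < ∞, and set 𝒯(N) = T_N···T_1. Then the averaged Landauer resistance satisfies the exact formula: E( Tr( 𝒯(N)* 𝒯(N) ) ) = 2 · ⟨ e₃ , ( E(Ad_{T_1}) )^N · e₃ ⟩ = 2 · ( A^N )_{3,3} for every N ≥ 1, where A = E(Ad_{T_1}) is the entrywise expectation of the 3×3 adjoint matrix. -/
open MeasureTheory ProbabilityTheory Matrix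

noncomputable section

/-- The Borel/product measurable structure on 2×2 real matrices (entrywise). -/
instance matrixMeasurableSpace : MeasurableSpace (Matrix (Fin 2) (Fin 2) ℝ) :=
  MeasurableSpace.comap (fun A => (fun i j => A i j : Fin 2 → Fin 2 → ℝ)) inferInstance

/-- The orthonormal basis `b₁, b₂, b₃` of `sl(2,ℝ)`. -/
def bBasis : Fin 3 → Matrix (Fin 2) (Fin 2) ℝ :=
  ![!![1, 0; 0, -1], !![0, 1; 1, 0], !![0, -1; 1, 0]]

/-- The adjoint representation of `T ∈ SL(2,ℝ)` in the basis `b₁, b₂, b₃`. -/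
def AdMat (T : Matrix (Fin 2) (Fin 2) ℝ) : Matrix (Fin 3) (Fin 3) ℝ :=
  Matrix.of fun j k => (1 / 2) * ((bBasis j)ᵀ * (T * bBasis k * T⁻¹)).trace

/-- Ordered product `T_N ⋯ T_1` of matrices, `F n` being `T_{n+1}`. -/
def prodT (F : ℕ → Matrix (Fin 2) (Fin 2) ℝ) (N : ℕ) : Matrix (Fin 2) (Fin 2) ℝ :=
  (((List.range N).map F).reverse).prod

/-- Polynomial version of the adjoint representation, using the adjugate. -/
def Ad' (T : Matrix (Fin 2) (Fin 2) ℝ) : Matrix (Fin 3) (Fin 3) ℝ :=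
  Matrix.of fun j k => (1 / 2) * ((bBasis j)ᵀ * (T * bBasis k * T.adjugate)).trace

lemma Ad'_apply (T : Matrix (Fin 2) (Fin 2) ℝ) :
    Ad' T = !![T 0 0 * T 1 1 + T 0 1 * T 1 0, T 0 1 * T 1 1 - T 0 0 * T 1 0,
        T 0 0 * T 1 0 + T 0 1 * T 1 1;
      T 1 0 * T 1 1 - T 0 0 * T 0 1,
        (T 0 0 ^ 2 - T 0 1 ^ 2 - T 1 0 ^ 2 + T 1 1 ^ 2) / 2,
        (- T 0 0 ^ 2 - T 0 1 ^ 2 + T 1 0 ^ 2 + T 1 1 ^ 2) / 2;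
      T 0 0 * T 0 1 + T 1 0 * T 1 1,
        (- T 0 0 ^ 2 + T 0 1 ^ 2 - T 1 0 ^ 2 + T 1 1 ^ 2) / 2,
        (T 0 0 ^ 2 + T 0 1 ^ 2 + T 1 0 ^ 2 + T 1 1 ^ 2) / 2] := by
  ext j k
  fin_cases j <;> fin_cases k <;>
    · simp [Ad', bBasis, Matrix.adjugate_fin_two, Matrix.trace_fin_two, Matrix.mul_apply,
        Fin.sum_univ_succ]
      ring

lemma Ad'_mul (S T : Matrix (Fin 2) (Fin 2) ℝ) : Ad' (S * T) = Ad' S * Ad' T := by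
  have hST : ∀ i j, (S * T) i j = S i 0 * T 0 j + S i 1 * T 1 j := by
    intro i j
    simp [Matrix.mul_apply, Fin.sum_univ_succ]
  rw [Ad'_apply, Ad'_apply S, Ad'_apply T]
  simp only [hST]
  ext j k
  fin_cases j <;> fin_cases k <;>
    · simp [Matrix.mul_apply, Fin.sum_univ_succ]
      ring

lemma Ad'_one : Ad' 1 = 1 := by
  rw [Ad'_apply]
  ext j k
  fin_cases j <;> fin_cases k <;> norm_num [Matrix.one_apply, Fin.ext_iff]

/-- `Ad'` as a monoid homomorphism. -/
def Ad'Hom : Matrix (Fin 2) (Fin 2) ℝ →* Matrix (Fin 3) (Fin 3) ℝ where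
  toFun := Ad'
  map_one' := Ad'_one
  map_mul' := Ad'_mul

lemma AdMat_eq_Ad' (T : Matrix (Fin 2) (Fin 2) ℝ) (h : T.det = 1) : AdMat T = Ad' T := by
  unfold AdMat Ad'
  rw [Matrix.inv_def, h]
  simp

lemma trace_eq_two_mul_Ad' (T : Matrix (Fin 2) (Fin 2) ℝ) :
    (Tᵀ * T).trace = 2 * Ad' T 2 2 := by
  rw [Ad'_apply]
  simp [Matrix.trace_fin_two, Matrix.mul_apply, Fin.sum_univ_succ]
  ring

@[measurability]
lemma measurable_entry (i j : Fin 2) :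
    Measurable fun M : Matrix (Fin 2) (Fin 2) ℝ => M i j := by
  have h : Measurable (fun A : Matrix (Fin 2) (Fin 2) ℝ => (fun i j => A i j : Fin 2 → Fin 2 → ℝ)) :=
    measurable_iff_comap_le.mpr le_rfl
  exact (measurable_pi_apply j).comp ((measurable_pi_apply i).comp h)

lemma measurable_adj (a b : Fin 2) :
    Measurable fun M : Matrix (Fin 2) (Fin 2) ℝ => M.adjugate a b := by
  fin_cases a <;> fin_cases b <;> simp only [Matrix.adjugate_fin_two]
  · exact measurable_entry 1 1
  · exact (measurable_entry 0 1).neg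
  · exact (measurable_entry 1 0).neg
  · exact measurable_entry 0 0

lemma measurable_Ad'_entry (i j : Fin 3) :
    Measurable fun M : Matrix (Fin 2) (Fin 2) ℝ => Ad' M i j := by
  simp only [Ad', Matrix.of_apply, Matrix.trace, Matrix.diag_apply, Matrix.mul_apply,
    Matrix.transpose_apply]
  apply Measurable.const_mul
  apply Finset.measurable_sum; intro x _
  apply Finset.measurable_sum; intro y _
  apply Measurable.const_mul
  apply Finset.measurable_sum; intro z _
  apply Measurable.mul
  · apply Finset.measurable_sum; intro w _
    exact (measurable_entry y w).mul_const _
  · exact measurable_adj z x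

/-- product `Ad'(v_{N-1}) ⋯ Ad'(v_0)` of the adjoints of a finite family. -/
def entProd (N : ℕ) (v : Fin N → Matrix (Fin 2) (Fin 2) ℝ) : Matrix (Fin 3) (Fin 3) ℝ :=
  ((List.ofFn fun i => Ad' (v i)).reverse).prod

lemma entProd_zero (v : Fin 0 → Matrix (Fin 2) (Fin 2) ℝ) : entProd 0 v = 1 := by
  simp [entProd]

lemma entProd_succ (N : ℕ) (v : Fin (N + 1) → Matrix (Fin 2) (Fin 2) ℝ) :
    entProd (N + 1) v = Ad' (v (Fin.last N)) * entProd N (fun i => v i.castSucc) := by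
  rw [entProd, List.ofFn_succ', List.concat_eq_append, List.reverse_append,
    List.reverse_singleton, List.singleton_append, List.prod_cons]
  rfl

lemma measurable_entProd (N : ℕ) (l k : Fin 3) :
    Measurable fun v : Fin N → Matrix (Fin 2) (Fin 2) ℝ => entProd N v l k := by
  induction N generalizing l k with
  | zero => simp only [entProd_zero]; exact measurable_const
  | succ N ih =>
    simp only [entProd_succ, Matrix.mul_apply]
    refine Finset.measurable_sum _ fun m _ => Measurable.mul ?_ ?_
    · exact (measurable_Ad'_entry l m).comp (measurable_pi_apply (Fin.last N))
    · exact (ih m k).comp (measurable_pi_lambda _ fun i => measurable_pi_apply i.castSucc)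

lemma range_map_eq_ofFn {α : Type*} (F : ℕ → α) : ∀ N : ℕ,
    (List.range N).map F = List.ofFn fun i : Fin N => F i
  | 0 => by simp
  | (N + 1) => by
    rw [List.range_succ, List.map_append, range_map_eq_ofFn F N, List.ofFn_succ']
    simp

lemma Ad'_prodT (F : ℕ → Matrix (Fin 2) (Fin 2) ℝ) (N : ℕ) :
    Ad' (prodT F N) = entProd N (fun i => F i) := by
  show Ad'Hom (((List.range N).map F).reverse.prod) = _
  rw [← List.prod_hom _ Ad'Hom, List.map_reverse, List.map_map,
    range_map_eq_ofFn (⇑Ad'Hom ∘ F) N]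
  rfl

/-- For i.i.d. random matrices in `SL(2,ℝ)` with integrable adjoint
matrix, the averaged Landauer resistance is exactly
`E(Tr(𝒯(N)*𝒯(N))) = 2·(Aᴺ)₃₃` where `A = E(Ad_{T₁})` entrywise. -/
theorem averaged_landauer_formula
    {Ω : Type*} [MeasurableSpace Ω] (μ : Measure Ω) [IsProbabilityMeasure μ]
    (Ts : ℕ → Ω → Matrix (Fin 2) (Fin 2) ℝ)
    (hmeas : ∀ n i j, Measurable fun ω => Ts n ω i j)
    (hdet : ∀ n ω, (Ts n ω).det = 1)
    (hindep : iIndepFun Ts μ)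
    (hlaw : ∀ n, Measure.map (Ts n) μ = Measure.map (Ts 0) μ)
    (hint : ∀ i j, Integrable (fun ω => AdMat (Ts 0 ω) i j) μ) :
    ∀ N : ℕ, 1 ≤ N →
      ∫ ω, ((prodT (fun n => Ts n ω) N)ᵀ * prodT (fun n => Ts n ω) N).trace ∂μ
        = 2 * ((Matrix.of fun i j => ∫ ω, AdMat (Ts 0 ω) i j ∂μ) ^ N) 2 2 := by
  -- measurability of each Ts n as a matrix-valued map
  have hTs : ∀ n, Measurable (Ts n) := by
    intro n
    rw [measurable_iff_comap_le, matrixMeasurableSpace, MeasurableSpace.comap_comp]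
    exact measurable_iff_comap_le.mp
      (measurable_pi_lambda _ fun i => measurable_pi_lambda _ fun j => hmeas n i j)
  -- the averaged adjoint matrix
  set A : Matrix (Fin 3) (Fin 3) ℝ :=
    Matrix.of fun i j => ∫ ω, AdMat (Ts 0 ω) i j ∂μ with hA
  have hA0 : ∀ i j, A i j = ∫ ω, Ad' (Ts 0 ω) i j ∂μ := by
    intro i j
    simp only [hA, Matrix.of_apply]
    congr 1
    funext ω
    rw [AdMat_eq_Ad' _ (hdet 0 ω)]
  have hint' : ∀ i j, Integrable (fun ω => Ad' (Ts 0 ω) i j) μ := by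
    intro i j
    have := hint i j
    simpa only [fun ω => AdMat_eq_Ad' (Ts 0 ω) (hdet 0 ω)] using this
  -- same law consequences
  have hintn : ∀ n i j, Integrable (fun ω => Ad' (Ts n ω) i j) μ := by
    intro n i j
    have h1 : Integrable (fun M => Ad' M i j) (Measure.map (Ts n) μ) := by
      rw [hlaw n]
      exact (integrable_map_measure (measurable_Ad'_entry i j).aestronglyMeasurable
        (hTs 0).aemeasurable).mpr (hint' i j)
    exact (integrable_map_measure (measurable_Ad'_entry i j).aestronglyMeasurable
      (hTs n).aemeasurable).mp h1
  have hmean : ∀ n i j, ∫ ω, Ad' (Ts n ω) i j ∂μ = A i j := by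
    intro n i j
    rw [hA0]
    rw [← integral_map (hTs n).aemeasurable (measurable_Ad'_entry i j).aestronglyMeasurable,
      hlaw n,
      integral_map (hTs 0).aemeasurable (measurable_Ad'_entry i j).aestronglyMeasurable]
  -- main induction
  have key : ∀ N : ℕ, ∀ l k : Fin 3,
      Integrable (fun ω => entProd N (fun i => Ts i ω) l k) μ ∧
      ∫ ω, entProd N (fun i => Ts i ω) l k ∂μ = (A ^ N) l k := by
    intro N
    induction N with
    | zero =>
      intro l k
      constructor
      · simp only [entProd_zero]
        exact integrable_const _
      · simp only [entProd_zero, pow_zero, integral_const, measure_univ, ENNReal.toReal_one, probReal_univ,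
          one_smul]
    | succ N ih =>
      intro l k
      -- independence of the new factor and the old product, entrywise
      have hIndep : ∀ m : Fin 3,
          IndepFun (fun ω => Ad' (Ts N ω) l m) (fun ω => entProd N (fun i => Ts i ω) m k) μ := by
        intro m
        have hNmem : (N : ℕ) ∈ ({N} : Finset ℕ) := Finset.mem_singleton_self N
        have hdisj : Disjoint ({N} : Finset ℕ) (Finset.range N) := by
          simp [Finset.disjoint_left]
        have hbase := hindep.indepFun_finset ({N} : Finset ℕ) (Finset.range N) hdisj hTs
        have hφ : Measurable
            (fun v : {x // x ∈ ({N} : Finset ℕ)} → Matrix (Fin 2) (Fin 2) ℝ =>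
              Ad' (v ⟨N, hNmem⟩) l m) :=
          (measurable_Ad'_entry l m).comp
            (measurable_pi_apply (⟨N, hNmem⟩ : {x // x ∈ ({N} : Finset ℕ)}))
        have hψ : Measurable
            (fun v : {x // x ∈ Finset.range N} → Matrix (Fin 2) (Fin 2) ℝ =>
              entProd N (fun i : Fin N => v ⟨i.1, Finset.mem_range.mpr i.2⟩) m k) :=
          (measurable_entProd N m k).comp
            (measurable_pi_lambda _ fun i =>
              measurable_pi_apply (⟨i.1, Finset.mem_range.mpr i.2⟩ : {x // x ∈ Finset.range N}))
        exact hbase.comp hφ hψ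
      -- decompose the entry of the product
      have hdecomp : ∀ ω, entProd (N + 1) (fun i => Ts i ω) l k
          = ∑ m : Fin 3, Ad' (Ts N ω) l m * entProd N (fun i => Ts i ω) m k := by
        intro ω
        rw [entProd_succ, Matrix.mul_apply]
        congr 1
      have hterm_int : ∀ m : Fin 3,
          Integrable (fun ω => Ad' (Ts N ω) l m * entProd N (fun i => Ts i ω) m k) μ :=
        fun m => (hIndep m).integrable_mul (hintn N l m) ((ih m k).1)
      constructor
      · simp only [hdecomp]
        exact integrable_finset_sum _ fun m _ => hterm_int m
      · calc ∫ ω, entProd (N + 1) (fun i => Ts i ω) l k ∂μ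
            = ∑ m : Fin 3, ∫ ω, Ad' (Ts N ω) l m * entProd N (fun i => Ts i ω) m k ∂μ := by
              simp only [hdecomp]
              exact integral_finset_sum _ fun m _ => hterm_int m
          _ = ∑ m : Fin 3, A l m * (A ^ N) m k := by
              refine Finset.sum_congr rfl fun m _ => ?_
              have hm : ∫ ω, Ad' (Ts N ω) l m * entProd N (fun i => Ts i ω) m k ∂μ
                  = (∫ ω, Ad' (Ts N ω) l m ∂μ)
                    * ∫ ω, entProd N (fun i => Ts i ω) m k ∂μ :=
                (hIndep m).integral_fun_mul_eq_mul_integral (hintn N l m).aestronglyMeasurable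
                    ((ih m k).1).aestronglyMeasurable
              rw [hm, hmean N l m, (ih m k).2]
          _ = (A ^ (N + 1)) l k := by
              rw [pow_succ', Matrix.mul_apply]
  intro N _
  have hLHS : ∀ ω, ((prodT (fun n => Ts n ω) N)ᵀ * prodT (fun n => Ts n ω) N).trace
      = 2 * entProd N (fun i => Ts i ω) 2 2 := by
    intro ω
    rw [trace_eq_two_mul_Ad', Ad'_prodT]
  calc ∫ ω, ((prodT (fun n => Ts n ω) N)ᵀ * prodT (fun n => Ts n ω) N).trace ∂μ
      = ∫ ω, 2 * entProd N (fun i => Ts i ω) 2 2 ∂μ := by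
        simp only [hLHS]
    _ = 2 * ∫ ω, entProd N (fun i => Ts i ω) 2 2 ∂μ := integral_const_mul 2 _
    _ = 2 * (A ^ N) 2 2 := by rw [(key N 2 2).2]
end
end
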